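/- Let 0 < q < 1 be real. Then \sum_{n \ge 1} (-1)^n (q;q^2)_{n-1} q^{n^2} / (q;q)_{2n-1} = (-q / (-q;q)_\infty) \cdot \omega(q), where \omega(q) := \sum_{n \ge 0} q^{2n(n+1)} / (q;q^2)_{n+1}^2 is Ramanujan's third order mock theta function \omega. -/

import Mathlib

open scoped BigOperators
open Filter Topology

/-- finite q-Pochhammer symbol $(a;q)_n$ -/
noncomputable def qp (a q : ℝ) (n : ℕ) : ℝ := ∏ k ∈ Finset.range n, (1 - a * q ^ k)

/-- infinite q-Pochhammer symbol $(a;q)_\infty$ -/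
noncomputable def qpInf (a q : ℝ) : ℝ := ∏' k : ℕ, (1 - a * q ^ k)

/-- the theta function $j(x,q) = (x;q)_\infty (q/x;q)_\infty (q;q)_\infty$ -/
noncomputable def jth (x q : ℝ) : ℝ := qpInf x q * qpInf (q / x) q * qpInf q q

/-- the Appell-Lerch series $m(x,q,z)$ -/
noncomputable def appellM (x q z : ℝ) : ℝ :=
  (1 / jth z q) *
    ∑' r : ℤ, (-1 : ℝ) ^ r * q ^ (r * (r - 1) / 2) * z ^ r / (1 - q ^ (r - 1) * x * z)

/-- sign function: 1 for r ≥ 0, -1 for r < 0 -/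
def sgn (r : ℤ) : ℤ := if 0 ≤ r then 1 else -1

/-- the Hecke-type double sum $f_{a,b,c}(x,y,q)$ -/
noncomputable def heckeF (a b c : ℤ) (x y q : ℝ) : ℝ :=
  ∑' rs : ℤ × ℤ,
    if sgn rs.1 = sgn rs.2 then
      (sgn rs.1 : ℝ) * (-1 : ℝ) ^ (rs.1 + rs.2) * x ^ rs.1 * y ^ rs.2 *
        q ^ (a * (rs.1 * (rs.1 - 1) / 2) + b * rs.1 * rs.2 + c * (rs.2 * (rs.2 - 1) / 2))
    else 0

/-- the theta quotient $\theta_{n,p}(x,y,q)$ of Hickerson-Mortenson; here real powers of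
the positive real `q` are `Real.rpow`, and `r, s` carry the fractional part of `(n-1)/2`,
so that the exponents of `(-x)` and `(-y)` are integers. -/
noncomputable def thetaNP (n p : ℕ) (x y q : ℝ) : ℝ :=
  (1 / jth (-1) (q ^ (n * p * (2 * n + p)))) *
    ∑ rst ∈ Finset.range p, ∑ sst ∈ Finset.range p,
      let r : ℝ := (rst : ℝ) + Int.fract (((n : ℝ) - 1) / 2)
      let s : ℝ := (sst : ℝ) + Int.fract (((n : ℝ) - 1) / 2)
      let R : ℝ := r - ((n : ℝ) - 1) / 2
      let S : ℝ := s + ((n : ℝ) + 1) / 2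
      q ^ ((n : ℝ) * (R * (R - 1) / 2) + ((n : ℝ) + (p : ℝ)) * R * S + (n : ℝ) * (S * (S - 1) / 2)) *
        (-x) ^ R * (-y) ^ S *
        (jth (q ^ (p ^ 2 * (2 * n + p))) (q ^ (3 * (p ^ 2 * (2 * n + p))))) ^ 3 *
        jth (-(q ^ ((n : ℝ) * (p : ℝ) * (s - r))) * x ^ n / y ^ n) (q ^ (n * p ^ 2)) *
        jth (q ^ ((p : ℝ) * (2 * (n : ℝ) + (p : ℝ)) * (r + s) + (p : ℝ) * ((n : ℝ) + (p : ℝ))) *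
            x ^ p * y ^ p) (q ^ (p ^ 2 * (2 * n + p))) /
        (jth (q ^ ((p : ℝ) * (2 * (n : ℝ) + (p : ℝ)) * r + (p : ℝ) * ((n : ℝ) + (p : ℝ)) / 2) *
              (-y) ^ (n + p) / (-x) ^ n) (q ^ (p ^ 2 * (2 * n + p))) *
          jth (q ^ ((p : ℝ) * (2 * (n : ℝ) + (p : ℝ)) * s + (p : ℝ) * ((n : ℝ) + (p : ℝ)) / 2) *
              (-x) ^ (n + p) / (-y) ^ n) (q ^ (p ^ 2 * (2 * n + p))))


lemma qp_succ (a q : ℝ) (n : ℕ) : qp a q (n + 1) = qp a q n * (1 - a * q ^ n) :=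
  Finset.prod_range_succ _ _

lemma qp_succ' (a q : ℝ) (n : ℕ) : qp a q (n + 1) = qp (a * q) q n * (1 - a) := by
  rw [qp, Finset.prod_range_succ']
  simp [qp, mul_assoc, pow_succ, mul_comm, mul_left_comm]

lemma qp_pos {a q : ℝ} (hq0 : 0 ≤ q) (hq1 : q ≤ 1) (ha0 : 0 ≤ a) (ha1 : a < 1) (n : ℕ) :
    0 < qp a q n := by
  apply Finset.prod_pos
  intro k _
  have h1 : a * q ^ k ≤ a * 1 := by
    apply mul_le_mul_of_nonneg_left _ ha0
    exact pow_le_one₀ hq0 hq1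
  linarith

lemma qp_le_one {a q : ℝ} (hq0 : 0 ≤ q) (hq1 : q ≤ 1) (ha0 : 0 ≤ a) (ha1 : a < 1) (n : ℕ) :
    qp a q n ≤ 1 := by
  apply Finset.prod_le_one
  · intro k _
    nlinarith [pow_le_one₀ hq0 hq1 (n := k), pow_nonneg hq0 k]
  · intro k _
    nlinarith [mul_nonneg ha0 (pow_nonneg hq0 k)]

/-- product over a finset of factors in (0,1] is antitone, hence HasProd -/
lemma hasProd_of_le_one {f : ℕ → ℝ} (h0 : ∀ i, 0 < f i) (h1 : ∀ i, f i ≤ 1) :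
    HasProd f (⨅ s : Finset ℕ, ∏ i ∈ s, f i) := by
  have anti : Antitone fun s : Finset ℕ => ∏ i ∈ s, f i := by
    intro s t hst
    have key : (∏ i ∈ t \ s, f i) * ∏ i ∈ s, f i = ∏ i ∈ t, f i :=
      Finset.prod_sdiff hst
    show ∏ i ∈ t, f i ≤ ∏ i ∈ s, f i
    rw [← key]
    have hle : ∏ i ∈ t \ s, f i ≤ 1 :=
      Finset.prod_le_one (fun i _ => (h0 i).le) (fun i _ => h1 i)
    have hp : 0 < ∏ i ∈ s, f i := Finset.prod_pos fun i _ => h0 i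
    nlinarith
  have hbdd : BddBelow (Set.range fun s : Finset ℕ => ∏ i ∈ s, f i) := by
    refine ⟨0, ?_⟩
    rintro x ⟨s, rfl⟩
    exact (Finset.prod_pos fun i _ => h0 i).le
  exact tendsto_atTop_ciInf anti hbdd

lemma hasProd_of_ge_one {f : ℕ → ℝ} (h0 : ∀ i, 1 ≤ f i) (hs : Summable fun i => f i - 1) :
    HasProd f (⨆ s : Finset ℕ, ∏ i ∈ s, f i) := by
  have mono : Monotone fun s : Finset ℕ => ∏ i ∈ s, f i := by
    intro s t hst
    have key : (∏ i ∈ t \ s, f i) * ∏ i ∈ s, f i = ∏ i ∈ t, f i :=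
      Finset.prod_sdiff hst
    show ∏ i ∈ s, f i ≤ ∏ i ∈ t, f i
    rw [← key]
    have hge : (1:ℝ) ≤ ∏ i ∈ t \ s, f i := by
      calc (1:ℝ) = ∏ _i ∈ t \ s, 1 := by simp
        _ ≤ ∏ i ∈ t \ s, f i :=
          Finset.prod_le_prod (fun i _ => zero_le_one) (fun i _ => h0 i)
    have hp : 0 < ∏ i ∈ s, f i :=
      Finset.prod_pos fun i _ => lt_of_lt_of_le one_pos (h0 i)
    nlinarith
  have hbdd : BddAbove (Set.range fun s : Finset ℕ => ∏ i ∈ s, f i) := by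
    refine ⟨Real.exp (∑' i, (f i - 1)), ?_⟩
    rintro x ⟨s, rfl⟩
    calc ∏ i ∈ s, f i ≤ ∏ i ∈ s, Real.exp (f i - 1) := by
          apply Finset.prod_le_prod (fun i _ => (lt_of_lt_of_le one_pos (h0 i)).le)
          intro i _
          have := Real.add_one_le_exp (f i - 1)
          linarith
      _ = Real.exp (∑ i ∈ s, (f i - 1)) := by rw [Real.exp_sum]
      _ ≤ Real.exp (∑' i, (f i - 1)) := by
          apply Real.exp_le_exp.2
          exact Summable.sum_le_tsum s (fun i _ => by linarith [h0 i]) hs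
  exact tendsto_atTop_ciSup mono hbdd

lemma one_sub_sum_le_prod {g : ℕ → ℝ} (h0 : ∀ i, 0 ≤ g i) (h1 : ∀ i, g i ≤ 1) (s : Finset ℕ) :
    1 - ∑ i ∈ s, g i ≤ ∏ i ∈ s, (1 - g i) := by
  classical
  induction s using Finset.cons_induction with
  | empty => simp
  | cons a s ha ih =>
    rw [Finset.prod_cons, Finset.sum_cons]
    have hs0 : (0:ℝ) ≤ ∑ i ∈ s, g i := Finset.sum_nonneg fun i _ => h0 i
    have hp0 : (0:ℝ) ≤ ∏ i ∈ s, (1 - g i) :=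
      Finset.prod_nonneg fun i _ => by linarith [h1 i]
    nlinarith [h0 a, h1 a]

section Q
variable {q : ℝ} (hq0 : 0 < q) (hq1 : q < 1)
include hq0 hq1

lemma hasProd_qpInf {a : ℝ} (ha0 : 0 ≤ a) (ha1 : a < 1) :
    HasProd (fun k => 1 - a * q ^ k) (qpInf a q) := by
  have h0 : ∀ k, 0 < 1 - a * q ^ k := by
    intro k
    nlinarith [pow_le_one₀ hq0.le hq1.le (n := k), pow_nonneg hq0.le k,
      mul_le_mul_of_nonneg_left (pow_le_one₀ hq0.le hq1.le (n := k)) ha0]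
  have h1 : ∀ k, 1 - a * q ^ k ≤ 1 := by
    intro k
    nlinarith [mul_nonneg ha0 (pow_nonneg hq0.le k)]
  have h := hasProd_of_le_one h0 h1
  rwa [qpInf, h.tprod_eq]

lemma qpInf_le_one {a : ℝ} (ha0 : 0 ≤ a) (ha1 : a < 1) : qpInf a q ≤ 1 := by
  have h := (hasProd_qpInf hq0 hq1 ha0 ha1).tendsto_prod_nat
  apply le_of_tendsto h
  filter_upwards with n
  exact qp_le_one hq0.le hq1.le ha0 ha1 n

lemma qpInf_ge {a : ℝ} (ha0 : 0 ≤ a) (ha1 : a < 1) : 1 - a / (1 - q) ≤ qpInf a q := by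
  have h := (hasProd_qpInf hq0 hq1 ha0 ha1).tendsto_prod_nat
  apply ge_of_tendsto h
  filter_upwards with n
  have hsum : ∑ k ∈ Finset.range n, a * q ^ k ≤ a / (1 - q) := by
    rw [← Finset.mul_sum]
    have h1 : ∑ k ∈ Finset.range n, q ^ k ≤ (1 - q)⁻¹ := by
      rw [← tsum_geometric_of_lt_one hq0.le hq1]
      exact Summable.sum_le_tsum _ (fun i _ => pow_nonneg hq0.le i)
        (summable_geometric_of_lt_one hq0.le hq1)
    calc a * ∑ k ∈ Finset.range n, q ^ k ≤ a * (1 - q)⁻¹ :=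
          mul_le_mul_of_nonneg_left h1 ha0
      _ = a / (1 - q) := by rw [div_eq_mul_inv]
  have := one_sub_sum_le_prod (g := fun k => a * q ^ k)
    (fun k => mul_nonneg ha0 (pow_nonneg hq0.le k))
    (fun k => by show a * q ^ k ≤ 1; nlinarith [pow_le_one₀ hq0.le hq1.le (n := k), pow_nonneg hq0.le k]) (Finset.range n)
  calc 1 - a / (1 - q) ≤ 1 - ∑ k ∈ Finset.range n, a * q ^ k := by linarith
    _ ≤ ∏ k ∈ Finset.range n, (1 - a * q ^ k) := this

lemma qpInf_prefix {a : ℝ} (ha0 : 0 ≤ a) (ha1 : a < 1) (n : ℕ) :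
    qpInf a q = qp a q n * qpInf (a * q ^ n) q := by
  have haq0 : 0 ≤ a * q ^ n := mul_nonneg ha0 (pow_nonneg hq0.le n)
  have haq1 : a * q ^ n < 1 := by
    nlinarith [pow_le_one₀ hq0.le hq1.le (n := n), pow_nonneg hq0.le n]
  have h2 : HasProd (fun j => 1 - a * q ^ (j + n)) (qpInf (a * q ^ n) q) := by
    have h := hasProd_qpInf hq0 hq1 haq0 haq1
    convert h using 2 with k
    rw [pow_add]
    ring
  have h3 : HasProd (fun k => 1 - a * q ^ k) (qp a q n * qpInf (a * q ^ n) q) :=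
    HasProd.prod_range_mul (f := fun k => 1 - a * q ^ k) h2
  exact (hasProd_qpInf hq0 hq1 ha0 ha1).unique h3

lemma qpInf_pos {a : ℝ} (ha0 : 0 ≤ a) (ha1 : a < 1) : 0 < qpInf a q := by
  obtain ⟨N, hN⟩ : ∃ N, q ^ N < 1 - q := exists_pow_lt_of_lt_one (by linarith) hq1
  have haq0 : 0 ≤ a * q ^ N := mul_nonneg ha0 (pow_nonneg hq0.le N)
  have haq1 : a * q ^ N < 1 - q := by
    nlinarith [pow_nonneg hq0.le N]
  have h1 : 0 < qpInf (a * q ^ N) q := by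
    have := qpInf_ge hq0 hq1 haq0 (by linarith)
    have h2 : a * q ^ N / (1 - q) < 1 := by
      rw [div_lt_one (by linarith)]
      linarith
    linarith
  rw [qpInf_prefix hq0 hq1 ha0 ha1 N]
  exact mul_pos (qp_pos hq0.le hq1.le ha0 ha1 N) h1

lemma qpInf_le_qp {a : ℝ} (ha0 : 0 ≤ a) (ha1 : a < 1) (n : ℕ) : qpInf a q ≤ qp a q n := by
  rw [qpInf_prefix hq0 hq1 ha0 ha1 n]
  have haq0 : 0 ≤ a * q ^ n := mul_nonneg ha0 (pow_nonneg hq0.le n)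
  have haq1 : a * q ^ n < 1 := by
    nlinarith [pow_le_one₀ hq0.le hq1.le (n := n), pow_nonneg hq0.le n]
  have h1 := qpInf_le_one hq0 hq1 haq0 haq1
  have h2 := qp_pos hq0.le hq1.le ha0 ha1 n
  nlinarith [qpInf_pos hq0 hq1 haq0 haq1]

end Q

lemma tri (n : ℕ) : (n + 1) * n / 2 = n * (n - 1) / 2 + n := by
  cases n with
  | zero => rfl
  | succ m =>
    obtain ⟨a, ha⟩ := Nat.even_mul_succ_self m
    have h1 : (m + 1 + 1) * (m + 1) = m * (m + 1) + 2 * (m + 1) := by ring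
    have h2 : (m + 1) * (m + 1 - 1) = m * (m + 1) := by
      simp [Nat.succ_sub_one]
      ring
    rw [h1, h2, ha]
    omega

noncomputable def eS (Q x : ℝ) : ℝ := ∑' n : ℕ, (-1) ^ n * Q ^ (n * (n - 1) / 2) * x ^ n / qp Q Q n

section Euler
variable {Q : ℝ} (hQ0 : 0 < Q) (hQ1 : Q < 1)
include hQ0 hQ1

lemma eS_term_abs_le {x : ℝ} (hx0 : 0 ≤ x) (n : ℕ) :
    |(-1) ^ n * Q ^ (n * (n - 1) / 2) * x ^ n / qp Q Q n| ≤ x ^ n * (qpInf Q Q)⁻¹ := by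
  have hc : 0 < qpInf Q Q := qpInf_pos hQ0 hQ1 hQ0.le hQ1
  have hqp : 0 < qp Q Q n := qp_pos hQ0.le hQ1.le hQ0.le hQ1 n
  have hqple : qpInf Q Q ≤ qp Q Q n := qpInf_le_qp hQ0 hQ1 hQ0.le hQ1 n
  rw [abs_div, abs_mul, abs_mul, abs_pow, abs_pow, abs_pow, abs_neg, abs_one, one_pow, one_mul,
    abs_of_nonneg hQ0.le, abs_of_nonneg hx0, abs_of_nonneg hqp.le]
  rw [div_le_iff₀ hqp]
  have h1 : Q ^ (n * (n - 1) / 2) ≤ 1 := pow_le_one₀ hQ0.le hQ1.le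
  have h2 : (1:ℝ) ≤ (qpInf Q Q)⁻¹ * qp Q Q n := by
    rw [← div_eq_inv_mul, le_div_iff₀ hc]
    linarith
  have h3 : Q ^ (n * (n - 1) / 2) * x ^ n ≤ x ^ n := by
    nlinarith [pow_nonneg hx0 n, pow_nonneg hQ0.le (n * (n - 1) / 2)]
  have h4 : x ^ n * 1 ≤ x ^ n * ((qpInf Q Q)⁻¹ * qp Q Q n) :=
    mul_le_mul_of_nonneg_left h2 (pow_nonneg hx0 n)
  calc Q ^ (n * (n - 1) / 2) * x ^ n ≤ x ^ n := h3
    _ = x ^ n * 1 := by ring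
    _ ≤ x ^ n * ((qpInf Q Q)⁻¹ * qp Q Q n) := h4
    _ = x ^ n * (qpInf Q Q)⁻¹ * qp Q Q n := by ring

lemma eS_summable {x : ℝ} (hx0 : 0 ≤ x) (hx1 : x < 1) :
    Summable fun n => (-1) ^ n * Q ^ (n * (n - 1) / 2) * x ^ n / qp Q Q n := by
  apply Summable.of_abs
  apply Summable.of_nonneg_of_le (fun n => abs_nonneg _) (eS_term_abs_le hQ0 hQ1 hx0)
  exact (summable_geometric_of_lt_one hx0 hx1).mul_right _

lemma eS_feq {x : ℝ} (hx0 : 0 ≤ x) (hx1 : x < 1) : eS Q x = (1 - x) * eS Q (x * Q) := by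
  have hxQ0 : 0 ≤ x * Q := mul_nonneg hx0 hQ0.le
  have hxQ1 : x * Q < 1 := by nlinarith
  set a : ℕ → ℝ := fun n => (-1) ^ n * Q ^ (n * (n - 1) / 2) * x ^ n / qp Q Q n with ha_def
  set b : ℕ → ℝ := fun n => (-1) ^ n * Q ^ (n * (n - 1) / 2) * (x * Q) ^ n / qp Q Q n with hb_def
  have ha : Summable a := eS_summable hQ0 hQ1 hx0 hx1
  have hb : Summable b := eS_summable hQ0 hQ1 hxQ0 hxQ1
  have key : ∀ n, a (n + 1) - b (n + 1) = -x * b n := by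
    intro n
    have hqp : qp Q Q (n + 1) = qp Q Q n * (1 - Q * Q ^ n) := qp_succ Q Q n
    have hqp0 : qp Q Q n ≠ 0 := (qp_pos hQ0.le hQ1.le hQ0.le hQ1 n).ne'
    have hf0 : (1 : ℝ) - Q * Q ^ n ≠ 0 := by
      have : Q * Q ^ n < 1 := by
        nlinarith [pow_le_one₀ hQ0.le hQ1.le (n := n), pow_nonneg hQ0.le n]
      linarith
    have he : (n + 1) * ((n + 1) - 1) / 2 = n * (n - 1) / 2 + n := by
      simpa using tri n
    simp only [ha_def, hb_def, he, hqp]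
    rw [pow_add]
    field_simp
    ring
  have hsub : Summable fun n => a n - b n := ha.sub hb
  have h0 : a 0 - b 0 = 0 := by simp [ha_def, hb_def]
  have hshift : ∑' n, (a n - b n) = ∑' n, (a (n + 1) - b (n + 1)) := by
    rw [Summable.tsum_eq_zero_add hsub, h0, zero_add]
  have : eS Q x - eS Q (x * Q) = -x * eS Q (x * Q) := by
    rw [eS, eS, ← Summable.tsum_sub ha hb, hshift]
    have : ∑' n, (a (n + 1) - b (n + 1)) = ∑' n, -x * b n := by
      exact tsum_congr key
    rw [this, tsum_mul_left]
  linarith [this]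

lemma eP_feq {x : ℝ} (hx0 : 0 ≤ x) (hx1 : x < 1) : qpInf x Q = (1 - x) * qpInf (x * Q) Q := by
  have := qpInf_prefix hQ0 hQ1 hx0 hx1 1
  rw [this]
  simp [qp]

lemma euler {x : ℝ} (hx0 : 0 ≤ x) (hx1 : x < 1) : qpInf x Q = eS Q x := by
  have hc : 0 < qpInf Q Q := qpInf_pos hQ0 hQ1 hQ0.le hQ1
  set K : ℝ := (qpInf Q Q)⁻¹ * (1 - x)⁻¹ + (1 - Q)⁻¹ with hK_def
  -- bound : for 0 ≤ y ≤ x, |eS Q y - qpInf y Q| ≤ K * y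
  have bound : ∀ y, 0 ≤ y → y ≤ x → |eS Q y - qpInf y Q| ≤ K * y := by
    intro y hy0 hyx
    have hy1 : y < 1 := lt_of_le_of_lt hyx hx1
    set a : ℕ → ℝ := fun n => (-1) ^ n * Q ^ (n * (n - 1) / 2) * y ^ n / qp Q Q n with ha_def
    have ha : Summable a := eS_summable hQ0 hQ1 hy0 hy1
    have h1 : eS Q y = 1 + ∑' n, a (n + 1) := by
      rw [eS, Summable.tsum_eq_zero_add ha]
      congr 1
      simp [ha_def, qp]
    have habs : ∀ n, |a (n + 1)| ≤ y * (x ^ n * (qpInf Q Q)⁻¹) := by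
      intro n
      calc |a (n + 1)| ≤ y ^ (n + 1) * (qpInf Q Q)⁻¹ := eS_term_abs_le hQ0 hQ1 hy0 (n + 1)
        _ ≤ y * (x ^ n * (qpInf Q Q)⁻¹) := by
          rw [pow_succ']
          have hle : y ^ n ≤ x ^ n := pow_le_pow_left₀ hy0 hyx n
          have hinv : 0 ≤ (qpInf Q Q)⁻¹ := inv_nonneg.2 hc.le
          nlinarith [pow_nonneg hy0 n, mul_le_mul_of_nonneg_left hle (mul_nonneg hy0 hinv)]
    have hsum2 : Summable fun n => y * (x ^ n * (qpInf Q Q)⁻¹) :=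
      (((summable_geometric_of_lt_one hx0 hx1).mul_right _).mul_left _)
    have h2 : |∑' n, a (n + 1)| ≤ y * ((1 - x)⁻¹ * (qpInf Q Q)⁻¹) := by
      have hsa : Summable fun n => |a (n + 1)| := (ha.comp_injective (add_left_injective 1)).abs
      calc |∑' n, a (n + 1)| = ‖∑' n, a (n + 1)‖ := (Real.norm_eq_abs _).symm
        _ ≤ ∑' n, ‖a (n + 1)‖ := norm_tsum_le_tsum_norm (by simpa [Real.norm_eq_abs] using hsa)
        _ = ∑' n, |a (n + 1)| := by simp [Real.norm_eq_abs]
        _ ≤ ∑' n, y * (x ^ n * (qpInf Q Q)⁻¹) := Summable.tsum_le_tsum habs hsa hsum2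
        _ = y * ((1 - x)⁻¹ * (qpInf Q Q)⁻¹) := by
            rw [tsum_mul_left, tsum_mul_right, tsum_geometric_of_lt_one hx0 hx1]
    have h3 : |qpInf y Q - 1| ≤ y * (1 - Q)⁻¹ := by
      have hle := qpInf_le_one hQ0 hQ1 hy0 hy1
      have hge := qpInf_ge hQ0 hQ1 hy0 hy1
      rw [abs_le]
      constructor
      · rw [div_eq_mul_inv] at hge
        linarith
      · linarith [mul_nonneg hy0 (inv_nonneg.2 (by linarith : (0:ℝ) ≤ 1 - Q))]
    calc |eS Q y - qpInf y Q| = |(∑' n, a (n + 1)) + (1 - qpInf y Q)| := by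
          rw [h1]; congr 1; ring
      _ ≤ |∑' n, a (n + 1)| + |1 - qpInf y Q| := abs_add_le _ _
      _ ≤ y * ((1 - x)⁻¹ * (qpInf Q Q)⁻¹) + y * (1 - Q)⁻¹ := by
          rw [abs_sub_comm]
          linarith [h2, h3]
      _ = K * y := by rw [hK_def]; ring
  -- iteration
  have step : ∀ y, 0 ≤ y → y < 1 → |eS Q y - qpInf y Q| ≤ |eS Q (y * Q) - qpInf (y * Q) Q| := by
    intro y hy0 hy1
    rw [eS_feq hQ0 hQ1 hy0 hy1, eP_feq hQ0 hQ1 hy0 hy1, ← mul_sub, abs_mul]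
    have h1 : |1 - y| ≤ 1 := by rw [abs_le]; constructor <;> linarith
    nlinarith [abs_nonneg (eS Q (y * Q) - qpInf (y * Q) Q), abs_nonneg (1 - y)]
  have iter : ∀ N : ℕ, |eS Q x - qpInf x Q| ≤ |eS Q (x * Q ^ N) - qpInf (x * Q ^ N) Q| := by
    intro N
    induction N with
    | zero => simp
    | succ n ih =>
      have hy0 : 0 ≤ x * Q ^ n := mul_nonneg hx0 (pow_nonneg hQ0.le n)
      have hy1 : x * Q ^ n < 1 := by
        nlinarith [pow_le_one₀ hQ0.le hQ1.le (n := n), pow_nonneg hQ0.le n]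
      have := step (x * Q ^ n) hy0 hy1
      have heq : x * Q ^ n * Q = x * Q ^ (n + 1) := by rw [pow_succ]; ring
      rw [heq] at this
      linarith
  have final : ∀ N : ℕ, |eS Q x - qpInf x Q| ≤ K * (x * Q ^ N) := by
    intro N
    have hy0 : 0 ≤ x * Q ^ N := mul_nonneg hx0 (pow_nonneg hQ0.le N)
    have hyx : x * Q ^ N ≤ x := by
      nlinarith [pow_le_one₀ hQ0.le hQ1.le (n := N), pow_nonneg hQ0.le N]
    exact le_trans (iter N) (bound _ hy0 hyx)
  have htend : Filter.Tendsto (fun N : ℕ => K * (x * Q ^ N)) Filter.atTop (nhds 0) := by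
    have := tendsto_pow_atTop_nhds_zero_of_lt_one hQ0.le hQ1
    have h2 := this.const_mul (K * x)
    simpa [mul_assoc] using h2
  have : |eS Q x - qpInf x Q| ≤ 0 := ge_of_tendsto' htend final
  have habs := abs_nonneg (eS Q x - qpInf x Q)
  have : |eS Q x - qpInf x Q| = 0 := le_antisymm this habs
  have := abs_eq_zero.1 this
  linarith

end Euler

lemma tsum_telescope' {r : ℕ → ℝ} (h0 : Filter.Tendsto r Filter.atTop (nhds 0))
    (hs : Summable fun n => r n - r (n + 1)) : ∑' n, (r n - r (n + 1)) = r 0 := by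
  apply HasSum.tsum_eq
  rw [hs.hasSum_iff_tendsto_nat]
  have h1 : ∀ n : ℕ, ∑ i ∈ Finset.range n, (r i - r (i + 1)) = r 0 - r n := fun n =>
    Finset.sum_range_sub' r n
  simp only [h1]
  simpa using tendsto_const_nhds.sub h0

noncomputable def fF (q t : ℝ) : ℝ := ∑' n : ℕ, t ^ n / qp q (q ^ 2) (n + 1)

noncomputable def fG (q t : ℝ) : ℝ :=
  ∑' n : ℕ, q ^ (2 * n ^ 2 + n) * t ^ n / (qp q (q ^ 2) (n + 1) * qp t (q ^ 2) (n + 1))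

section Fine
variable {q : ℝ} (hq0 : 0 < q) (hq1 : q < 1)
include hq0 hq1

lemma hQ0' : 0 < q ^ 2 := by positivity

lemma hQ1' : q ^ 2 < 1 := by nlinarith

lemma qp_ge_qpInf {a : ℝ} (ha0 : 0 ≤ a) (ha1 : a < 1) (n : ℕ) :
    qpInf a (q ^ 2) ≤ qp a (q ^ 2) n :=
  qpInf_le_qp (hQ0' hq0 hq1) (hQ1' hq0 hq1) ha0 ha1 n

lemma qp_anti_a {a b : ℝ} (ha0 : 0 ≤ a) (hab : a ≤ b) (hb1 : b < 1) (n : ℕ) :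
    qp b (q ^ 2) n ≤ qp a (q ^ 2) n := by
  apply Finset.prod_le_prod
  · intro k _
    have hp : (0:ℝ) ≤ (q ^ 2) ^ k := by positivity
    have h1 : (q ^ 2) ^ k ≤ 1 := pow_le_one₀ (by positivity) (hQ1' hq0 hq1).le
    nlinarith
  · intro k _
    have hp : (0:ℝ) ≤ (q ^ 2) ^ k := by positivity
    nlinarith

lemma fF_term_le' {t : ℝ} (ht0 : 0 ≤ t) (n m : ℕ) :
    t ^ n / qp q (q ^ 2) m ≤ t ^ n * (qpInf q (q ^ 2))⁻¹ := by
  have hc : 0 < qpInf q (q ^ 2) := qpInf_pos (hQ0' hq0 hq1) (hQ1' hq0 hq1) hq0.le hq1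
  have hqp := qp_ge_qpInf hq0 hq1 hq0.le hq1 m
  have hqp0 : 0 < qp q (q ^ 2) m := lt_of_lt_of_le hc hqp
  rw [div_le_iff₀ hqp0]
  have h2 : (1:ℝ) ≤ (qpInf q (q ^ 2))⁻¹ * qp q (q ^ 2) m := by
    rw [← div_eq_inv_mul, le_div_iff₀ hc]
    linarith
  nlinarith [pow_nonneg ht0 n]

lemma fF_term_le {t : ℝ} (ht0 : 0 ≤ t) (n : ℕ) :
    t ^ n / qp q (q ^ 2) (n + 1) ≤ t ^ n * (qpInf q (q ^ 2))⁻¹ :=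
  fF_term_le' hq0 hq1 ht0 n (n + 1)

lemma fF_summable {t : ℝ} (ht0 : 0 ≤ t) (ht1 : t < 1) :
    Summable fun n => t ^ n / qp q (q ^ 2) (n + 1) := by
  apply Summable.of_nonneg_of_le _ (fF_term_le hq0 hq1 ht0)
  · exact (summable_geometric_of_lt_one ht0 ht1).mul_right _
  · intro n
    have hc : 0 < qpInf q (q ^ 2) := qpInf_pos (hQ0' hq0 hq1) (hQ1' hq0 hq1) hq0.le hq1
    have hqp0 : 0 < qp q (q ^ 2) (n + 1) :=
      lt_of_lt_of_le hc (qp_ge_qpInf hq0 hq1 hq0.le hq1 (n + 1))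
    positivity

lemma fG_term_le {t : ℝ} (ht0 : 0 ≤ t) (ht1 : t < 1) (n : ℕ) :
    q ^ (2 * n ^ 2 + n) * t ^ n / (qp q (q ^ 2) (n + 1) * qp t (q ^ 2) (n + 1)) ≤
      t ^ n * ((qpInf q (q ^ 2))⁻¹ * (qpInf t (q ^ 2))⁻¹) := by
  have hQ0 := hQ0' hq0 hq1
  have hQ1 := hQ1' hq0 hq1
  have hc : 0 < qpInf q (q ^ 2) := qpInf_pos hQ0 hQ1 hq0.le hq1
  have hct : 0 < qpInf t (q ^ 2) := qpInf_pos hQ0 hQ1 ht0 ht1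
  have h1 := qp_ge_qpInf hq0 hq1 hq0.le hq1 (n + 1)
  have h2 := qp_ge_qpInf hq0 hq1 ht0 ht1 (n + 1)
  have hqp1 : 0 < qp q (q ^ 2) (n + 1) := lt_of_lt_of_le hc h1
  have hqp2 : 0 < qp t (q ^ 2) (n + 1) := lt_of_lt_of_le hct h2
  rw [div_le_iff₀ (by positivity)]
  have hq3 : q ^ (2 * n ^ 2 + n) ≤ 1 := pow_le_one₀ hq0.le hq1.le
  have key : t ^ n * ((qpInf q (q ^ 2))⁻¹ * (qpInf t (q ^ 2))⁻¹) *
      (qp q (q ^ 2) (n + 1) * qp t (q ^ 2) (n + 1)) ≥ t ^ n := by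
    have e1 : (1:ℝ) ≤ (qpInf q (q ^ 2))⁻¹ * qp q (q ^ 2) (n + 1) := by
      rw [← div_eq_inv_mul, le_div_iff₀ hc]; linarith
    have e2 : (1:ℝ) ≤ (qpInf t (q ^ 2))⁻¹ * qp t (q ^ 2) (n + 1) := by
      rw [← div_eq_inv_mul, le_div_iff₀ hct]; linarith
    have e3 : (1:ℝ) ≤ ((qpInf q (q ^ 2))⁻¹ * qp q (q ^ 2) (n + 1)) *
        ((qpInf t (q ^ 2))⁻¹ * qp t (q ^ 2) (n + 1)) := by nlinarith
    nlinarith [pow_nonneg ht0 n]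
  nlinarith [pow_nonneg ht0 n, pow_nonneg hq0.le (2 * n ^ 2 + n)]

lemma fG_summable {t : ℝ} (ht0 : 0 ≤ t) (ht1 : t < 1) :
    Summable fun n =>
      q ^ (2 * n ^ 2 + n) * t ^ n / (qp q (q ^ 2) (n + 1) * qp t (q ^ 2) (n + 1)) := by
  apply Summable.of_nonneg_of_le _ (fG_term_le hq0 hq1 ht0 ht1)
  · exact (summable_geometric_of_lt_one ht0 ht1).mul_right _
  · intro n
    have hQ0 := hQ0' hq0 hq1
    have hQ1 := hQ1' hq0 hq1
    have hqp1 : 0 < qp q (q ^ 2) (n + 1) :=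
      lt_of_lt_of_le (qpInf_pos hQ0 hQ1 hq0.le hq1) (qp_ge_qpInf hq0 hq1 hq0.le hq1 (n + 1))
    have hqp2 : 0 < qp t (q ^ 2) (n + 1) :=
      lt_of_lt_of_le (qpInf_pos hQ0 hQ1 ht0 ht1) (qp_ge_qpInf hq0 hq1 ht0 ht1 (n + 1))
    positivity

end Fine

section Fine2
variable {q : ℝ} (hq0 : 0 < q) (hq1 : q < 1)
include hq0 hq1

lemma qp_pos' {a : ℝ} (ha0 : 0 ≤ a) (ha1 : a < 1) (n : ℕ) : 0 < qp a (q ^ 2) n :=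
  qp_pos (hQ0' hq0 hq1).le (hQ1' hq0 hq1).le ha0 ha1 n

lemma tQsq_lt_one {t : ℝ} (ht0 : 0 ≤ t) (ht1 : t < 1) : t * q ^ 2 < 1 := by
  nlinarith [hQ1' hq0 hq1, hQ0' hq0 hq1]

lemma fF_feq {t : ℝ} (ht0 : 0 ≤ t) (ht1 : t < 1) :
    (1 - t) * fF q t = 1 + q * fF q (t * q ^ 2) := by
  have hQ0 := hQ0' hq0 hq1
  have hQ1 := hQ1' hq0 hq1
  set r : ℕ → ℝ := fun n => t ^ n / qp q (q ^ 2) n with hr_def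
  have hr0 : r 0 = 1 := by simp [hr_def, qp]
  have hqp0 : ∀ n, (0:ℝ) < qp q (q ^ 2) n := fun n => qp_pos' hq0 hq1 hq0.le hq1 n
  have key : ∀ n : ℕ, (1 - t) * (t ^ n / qp q (q ^ 2) (n + 1)) -
      q * ((t * q ^ 2) ^ n / qp q (q ^ 2) (n + 1)) = r n - r (n + 1) := by
    intro n
    have hs : qp q (q ^ 2) (n + 1) = qp q (q ^ 2) n * (1 - q * (q ^ 2) ^ n) := qp_succ _ _ _
    have hX0 : qp q (q ^ 2) (n + 1) ≠ 0 := (hqp0 (n + 1)).ne'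
    have hY0 : qp q (q ^ 2) n ≠ 0 := (hqp0 n).ne'
    simp only [hr_def]
    field_simp
    rw [hs]
    ring
  have htends : Filter.Tendsto r Filter.atTop (nhds 0) := by
    apply squeeze_zero (fun n => div_nonneg (pow_nonneg ht0 n) (hqp0 n).le)
      (fun n => fF_term_le' hq0 hq1 ht0 n n)
    have := tendsto_pow_atTop_nhds_zero_of_lt_one ht0 ht1
    simpa using this.mul_const _
  have hsum1 : Summable fun n => t ^ n / qp q (q ^ 2) (n + 1) := fF_summable hq0 hq1 ht0 ht1
  have hsum2 : Summable fun n => (t * q ^ 2) ^ n / qp q (q ^ 2) (n + 1) :=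
    fF_summable hq0 hq1 (by positivity) (tQsq_lt_one hq0 hq1 ht0 ht1)
  have hsum3 : Summable fun n => r n - r (n + 1) := by
    apply Summable.congr ((hsum1.mul_left (1 - t)).sub (hsum2.mul_left q))
    intro n
    exact key n
  have main : (1 - t) * fF q t - q * fF q (t * q ^ 2) = 1 := by
    rw [fF, fF, ← tsum_mul_left, ← tsum_mul_left, ← Summable.tsum_sub (hsum1.mul_left (1 - t))
      (hsum2.mul_left q)]
    rw [tsum_congr key, tsum_telescope' htends hsum3, hr0]
  linarith

lemma fG_feq {t : ℝ} (ht0 : 0 ≤ t) (ht1 : t < 1) :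
    (1 - t) * fG q t = 1 + q * fG q (t * q ^ 2) := by
  have hQ0 := hQ0' hq0 hq1
  have hQ1 := hQ1' hq0 hq1
  have htq0 : 0 ≤ t * q ^ 2 := by positivity
  have htq1 : t * q ^ 2 < 1 := tQsq_lt_one hq0 hq1 ht0 ht1
  set v : ℕ → ℝ := fun n =>
    q ^ (2 * n ^ 2 + n) * t ^ n / (qp q (q ^ 2) n * qp (t * q ^ 2) (q ^ 2) n) with hv_def
  have hv0 : v 0 = 1 := by simp [hv_def, qp]
  have key : ∀ n : ℕ,
      (1 - t) * (q ^ (2 * n ^ 2 + n) * t ^ n / (qp q (q ^ 2) (n + 1) * qp t (q ^ 2) (n + 1))) -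
      q * (q ^ (2 * n ^ 2 + n) * (t * q ^ 2) ^ n /
        (qp q (q ^ 2) (n + 1) * qp (t * q ^ 2) (q ^ 2) (n + 1))) = v n - v (n + 1) := by
    intro n
    have e1 : qp t (q ^ 2) (n + 1) = qp (t * q ^ 2) (q ^ 2) n * (1 - t) := qp_succ' _ _ _
    have e2 : qp q (q ^ 2) (n + 1) = qp q (q ^ 2) n * (1 - q * (q ^ 2) ^ n) := qp_succ _ _ _
    have e3 : qp (t * q ^ 2) (q ^ 2) (n + 1) =
        qp (t * q ^ 2) (q ^ 2) n * (1 - t * q ^ 2 * (q ^ 2) ^ n) := qp_succ _ _ _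
    have hne1 : (1:ℝ) - q * (q ^ 2) ^ n ≠ 0 := by
      have h1 : q * (q ^ 2) ^ n ≤ q * 1 :=
        mul_le_mul_of_nonneg_left (pow_le_one₀ hQ0.le hQ1.le) hq0.le
      nlinarith
    have hne2 : (1:ℝ) - t * q ^ 2 * (q ^ 2) ^ n ≠ 0 := by
      have h1 : t * q ^ 2 * (q ^ 2) ^ n ≤ t * q ^ 2 * 1 :=
        mul_le_mul_of_nonneg_left (pow_le_one₀ hQ0.le hQ1.le) htq0
      nlinarith
    have hY1 : qp q (q ^ 2) n ≠ 0 := (qp_pos' hq0 hq1 hq0.le hq1 n).ne'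
    have hY2 : qp (t * q ^ 2) (q ^ 2) n ≠ 0 := (qp_pos' hq0 hq1 htq0 htq1 n).ne'
    have hX1 : qp q (q ^ 2) (n + 1) ≠ 0 := (qp_pos' hq0 hq1 hq0.le hq1 (n + 1)).ne'
    have hX2 : qp t (q ^ 2) (n + 1) ≠ 0 := (qp_pos' hq0 hq1 ht0 ht1 (n + 1)).ne'
    have hX3 : qp (t * q ^ 2) (q ^ 2) (n + 1) ≠ 0 := (qp_pos' hq0 hq1 htq0 htq1 (n + 1)).ne'
    have hexp : 2 * (n + 1) ^ 2 + (n + 1) = (2 * n ^ 2 + n) + (4 * n + 3) := by ring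
    simp only [hv_def, hexp, pow_add]
    field_simp
    rw [e1, e2, e3]
    ring
  have hterm_le := fG_term_le hq0 hq1 ht0 ht1
  have hvpos : ∀ n, 0 ≤ v n := by
    intro n
    have h1 : (0:ℝ) < qp q (q ^ 2) n := qp_pos' hq0 hq1 hq0.le hq1 n
    have h2 : (0:ℝ) < qp (t * q ^ 2) (q ^ 2) n := qp_pos' hq0 hq1 htq0 htq1 n
    positivity
  have hvle : ∀ n, v n ≤ t ^ n * ((qpInf q (q ^ 2))⁻¹ * (qpInf (t * q ^ 2) (q ^ 2))⁻¹) := by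
    intro n
    have hc : 0 < qpInf q (q ^ 2) := qpInf_pos hQ0 hQ1 hq0.le hq1
    have hct : 0 < qpInf (t * q ^ 2) (q ^ 2) := qpInf_pos hQ0 hQ1 htq0 htq1
    have h1 := qp_ge_qpInf hq0 hq1 hq0.le hq1 n
    have h2 := qp_ge_qpInf hq0 hq1 htq0 htq1 n
    have hqp1 : 0 < qp q (q ^ 2) n := lt_of_lt_of_le hc h1
    have hqp2 : 0 < qp (t * q ^ 2) (q ^ 2) n := lt_of_lt_of_le hct h2
    rw [hv_def]
    simp only
    rw [div_le_iff₀ (by positivity)]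
    have hq3 : q ^ (2 * n ^ 2 + n) ≤ 1 := pow_le_one₀ hq0.le hq1.le
    have e1 : (1:ℝ) ≤ (qpInf q (q ^ 2))⁻¹ * qp q (q ^ 2) n := by
      rw [← div_eq_inv_mul, le_div_iff₀ hc]; linarith
    have e2 : (1:ℝ) ≤ (qpInf (t * q ^ 2) (q ^ 2))⁻¹ * qp (t * q ^ 2) (q ^ 2) n := by
      rw [← div_eq_inv_mul, le_div_iff₀ hct]; linarith
    have e3 : (1:ℝ) ≤ ((qpInf q (q ^ 2))⁻¹ * qp q (q ^ 2) n) *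
        ((qpInf (t * q ^ 2) (q ^ 2))⁻¹ * qp (t * q ^ 2) (q ^ 2) n) := by nlinarith
    nlinarith [pow_nonneg ht0 n, pow_nonneg hq0.le (2 * n ^ 2 + n), mul_pos hqp1 hqp2,
      mul_nonneg (pow_nonneg ht0 n) (mul_nonneg (inv_nonneg.2 hc.le) (inv_nonneg.2 hct.le))]
  have htends : Filter.Tendsto v Filter.atTop (nhds 0) := by
    apply squeeze_zero hvpos hvle
    have := tendsto_pow_atTop_nhds_zero_of_lt_one ht0 ht1
    simpa using this.mul_const _
  have hsum1 := fG_summable hq0 hq1 ht0 ht1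
  have hsum2' := fG_summable hq0 hq1 htq0 htq1
  have hsum3 : Summable fun n => v n - v (n + 1) := by
    apply Summable.congr ((hsum1.mul_left (1 - t)).sub (hsum2'.mul_left q))
    intro n
    exact key n
  have main : (1 - t) * fG q t - q * fG q (t * q ^ 2) = 1 := by
    rw [fG, fG, ← tsum_mul_left, ← tsum_mul_left, ← Summable.tsum_sub (hsum1.mul_left (1 - t))
      (hsum2'.mul_left q)]
    rw [tsum_congr key, tsum_telescope' htends hsum3, hv0]
  linarith

end Fine2

section Fine3
variable {q : ℝ} (hq0 : 0 < q) (hq1 : q < 1)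
include hq0 hq1

lemma fF_nonneg {t : ℝ} (ht0 : 0 ≤ t) (ht1 : t < 1) : 0 ≤ fF q t := by
  apply tsum_nonneg
  intro n
  exact div_nonneg (pow_nonneg ht0 n) (qp_pos' hq0 hq1 hq0.le hq1 (n + 1)).le

lemma fG_nonneg {t : ℝ} (ht0 : 0 ≤ t) (ht1 : t < 1) : 0 ≤ fG q t := by
  apply tsum_nonneg
  intro n
  have h1 := qp_pos' hq0 hq1 hq0.le hq1 (n + 1)
  have h2 := qp_pos' hq0 hq1 ht0 ht1 (n + 1)
  positivity

lemma fF_le {t : ℝ} (ht0 : 0 ≤ t) (ht1 : t < 1) :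
    fF q t ≤ (1 - t)⁻¹ * (qpInf q (q ^ 2))⁻¹ := by
  have hsum2 : Summable fun n : ℕ => t ^ n * (qpInf q (q ^ 2))⁻¹ :=
    (summable_geometric_of_lt_one ht0 ht1).mul_right _
  calc fF q t ≤ ∑' n : ℕ, t ^ n * (qpInf q (q ^ 2))⁻¹ :=
        Summable.tsum_le_tsum (fF_term_le hq0 hq1 ht0) (fF_summable hq0 hq1 ht0 ht1) hsum2
    _ = (1 - t)⁻¹ * (qpInf q (q ^ 2))⁻¹ := by
        rw [tsum_mul_right, tsum_geometric_of_lt_one ht0 ht1]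

lemma fG_le {t : ℝ} (ht0 : 0 ≤ t) (ht1 : t < 1) :
    fG q t ≤ (1 - t)⁻¹ * ((qpInf q (q ^ 2))⁻¹ * (qpInf t (q ^ 2))⁻¹) := by
  have hsum2 : Summable fun n : ℕ => t ^ n * ((qpInf q (q ^ 2))⁻¹ * (qpInf t (q ^ 2))⁻¹) :=
    (summable_geometric_of_lt_one ht0 ht1).mul_right _
  calc fG q t ≤ ∑' n : ℕ, t ^ n * ((qpInf q (q ^ 2))⁻¹ * (qpInf t (q ^ 2))⁻¹) :=
        Summable.tsum_le_tsum (fG_term_le hq0 hq1 ht0 ht1) (fG_summable hq0 hq1 ht0 ht1) hsum2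
    _ = (1 - t)⁻¹ * ((qpInf q (q ^ 2))⁻¹ * (qpInf t (q ^ 2))⁻¹) := by
        rw [tsum_mul_right, tsum_geometric_of_lt_one ht0 ht1]

lemma qpInf_anti_a {a b : ℝ} (ha0 : 0 ≤ a) (hab : a ≤ b) (hb1 : b < 1) :
    qpInf b (q ^ 2) ≤ qpInf a (q ^ 2) := by
  have hQ0 := hQ0' hq0 hq1
  have hQ1 := hQ1' hq0 hq1
  have h1 := (hasProd_qpInf hQ0 hQ1 (le_trans ha0 hab) hb1).tendsto_prod_nat
  have h2 := (hasProd_qpInf hQ0 hQ1 ha0 (lt_of_le_of_lt hab hb1)).tendsto_prod_nat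
  exact le_of_tendsto_of_tendsto' h1 h2 fun n => qp_anti_a hq0 hq1 ha0 hab hb1 n

lemma fine_eq {t : ℝ} (ht0 : 0 ≤ t) (ht1 : t < 1) : fF q t = fG q t := by
  have hQ0 := hQ0' hq0 hq1
  have hQ1 := hQ1' hq0 hq1
  have hct : 0 < qpInf t (q ^ 2) := qpInf_pos hQ0 hQ1 ht0 ht1
  have hc : 0 < qpInf q (q ^ 2) := qpInf_pos hQ0 hQ1 hq0.le hq1
  set M : ℝ := (1 - t)⁻¹ * (qpInf q (q ^ 2))⁻¹ * (1 + (qpInf t (q ^ 2))⁻¹) with hM_def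
  have hMbound : ∀ y, 0 ≤ y → y ≤ t → |fF q y - fG q y| ≤ M := by
    intro y hy0 hyt
    have hy1 : y < 1 := lt_of_le_of_lt hyt ht1
    have h1 := fF_le hq0 hq1 hy0 hy1
    have h2 := fG_le hq0 hq1 hy0 hy1
    have h3 := fF_nonneg hq0 hq1 hy0 hy1
    have h4 := fG_nonneg hq0 hq1 hy0 hy1
    have hcy : 0 < qpInf y (q ^ 2) := qpInf_pos hQ0 hQ1 hy0 hy1
    have hinv1 : (1 - y)⁻¹ ≤ (1 - t)⁻¹ :=
      inv_anti₀ (by linarith) (by linarith)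
    have hinv2 : (qpInf y (q ^ 2))⁻¹ ≤ (qpInf t (q ^ 2))⁻¹ :=
      inv_anti₀ hct (qpInf_anti_a hq0 hq1 hy0 hyt ht1)
    have hb1 : fF q y ≤ (1 - t)⁻¹ * (qpInf q (q ^ 2))⁻¹ := by
      apply le_trans h1
      have : (0:ℝ) ≤ (qpInf q (q ^ 2))⁻¹ := by positivity
      nlinarith
    have hb2 : fG q y ≤ (1 - t)⁻¹ * (qpInf q (q ^ 2))⁻¹ * (qpInf t (q ^ 2))⁻¹ := by
      apply le_trans h2
      have e0 : (0:ℝ) ≤ (qpInf q (q ^ 2))⁻¹ := by positivity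
      have e1 : (0:ℝ) ≤ (1 - y)⁻¹ := by
        apply inv_nonneg.2; linarith
      have e2 : (0:ℝ) ≤ (qpInf y (q ^ 2))⁻¹ := by positivity
      have e3 : (0:ℝ) ≤ (1 - t)⁻¹ := by apply inv_nonneg.2; linarith
      nlinarith [mul_le_mul hinv1 hinv2 e2 e3]
    rw [abs_sub_le_iff]
    constructor
    · rw [hM_def]; nlinarith
    · rw [hM_def]; nlinarith
  have claim : ∀ N : ℕ, ∀ y, 0 ≤ y → y ≤ t →
      |fF q y - fG q y| * qp y (q ^ 2) N ≤ q ^ N * M := by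
    intro N
    induction N with
    | zero =>
      intro y hy0 hyt
      simpa [qp] using hMbound y hy0 hyt
    | succ n ih =>
      intro y hy0 hyt
      have hy1 : y < 1 := lt_of_le_of_lt hyt ht1
      have hyq0 : 0 ≤ y * q ^ 2 := by positivity
      have hyqt : y * q ^ 2 ≤ t := by nlinarith
      have hstep : (1 - y) * (fF q y - fG q y) = q * (fF q (y * q ^ 2) - fG q (y * q ^ 2)) := by
        have e1 := fF_feq hq0 hq1 hy0 hy1
        have e2 := fG_feq hq0 hq1 hy0 hy1
        nlinarith [e1, e2]
      have hqs : qp y (q ^ 2) (n + 1) = qp (y * q ^ 2) (q ^ 2) n * (1 - y) := qp_succ' _ _ _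
      have habs : |fF q y - fG q y| * (1 - y) = q * |fF q (y * q ^ 2) - fG q (y * q ^ 2)| := by
        have := congrArg abs hstep
        rw [abs_mul, abs_mul, abs_of_nonneg (by linarith : (0:ℝ) ≤ 1 - y),
          abs_of_nonneg hq0.le] at this
        linarith [this]
      calc |fF q y - fG q y| * qp y (q ^ 2) (n + 1)
          = (|fF q y - fG q y| * (1 - y)) * qp (y * q ^ 2) (q ^ 2) n := by
            rw [hqs]; ring
        _ = q * (|fF q (y * q ^ 2) - fG q (y * q ^ 2)| * qp (y * q ^ 2) (q ^ 2) n) := by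
            rw [habs]; ring
        _ ≤ q * (q ^ n * M) := by
            have := ih (y * q ^ 2) hyq0 hyqt
            nlinarith [this]
        _ = q ^ (n + 1) * M := by ring
  have final : ∀ N : ℕ, |fF q t - fG q t| ≤ q ^ N * (M / qpInf t (q ^ 2)) := by
    intro N
    have h1 := claim N t ht0 le_rfl
    have h2 : qpInf t (q ^ 2) ≤ qp t (q ^ 2) N := qp_ge_qpInf hq0 hq1 ht0 ht1 N
    have h3 : 0 ≤ |fF q t - fG q t| := abs_nonneg _
    have key : |fF q t - fG q t| * qpInf t (q ^ 2) ≤ q ^ N * M := by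
      calc |fF q t - fG q t| * qpInf t (q ^ 2) ≤ |fF q t - fG q t| * qp t (q ^ 2) N := by
            nlinarith
        _ ≤ q ^ N * M := h1
    rw [mul_div_assoc'] at *
    rw [le_div_iff₀ hct]
    exact key

  have htend : Filter.Tendsto (fun N : ℕ => q ^ N * (M / qpInf t (q ^ 2)))
      Filter.atTop (nhds 0) := by
    have := tendsto_pow_atTop_nhds_zero_of_lt_one hq0.le hq1
    simpa using this.mul_const _
  have hle : |fF q t - fG q t| ≤ 0 := ge_of_tendsto' htend final
  have := abs_nonneg (fF q t - fG q t)
  have h0 : |fF q t - fG q t| = 0 := le_antisymm hle this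
  have := abs_eq_zero.1 h0
  linarith

end Fine3

section Pairing
variable {q : ℝ} (hq0 : 0 < q) (hq1 : q < 1)
include hq0 hq1

lemma hasProd_neg_q : HasProd (fun k : ℕ => 1 + q * q ^ k) (qpInf (-q) q) := by
  have h0 : ∀ k : ℕ, (1:ℝ) ≤ 1 + q * q ^ k := by
    intro k
    nlinarith [pow_nonneg hq0.le k, pow_pos hq0 k]
  have hs : Summable fun k : ℕ => (1 + q * q ^ k) - 1 := by
    have : Summable fun k : ℕ => q * q ^ k :=
      (summable_geometric_of_lt_one hq0.le hq1).mul_left q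
    apply this.congr
    intro k
    ring
  have h := hasProd_of_ge_one h0 hs
  have heq : (fun k : ℕ => 1 - (-q) * q ^ k) = fun k : ℕ => 1 + q * q ^ k := by
    funext k
    ring
  have : qpInf (-q) q = ⨆ s : Finset ℕ, ∏ i ∈ s, (1 + q * q ^ i) := by
    rw [qpInf, heq]
    exact h.tprod_eq
  rwa [this]

lemma qqsplit : qpInf q q = qpInf q (q ^ 2) * qpInf (q ^ 2) (q ^ 2) := by
  have hQ0 := hQ0' hq0 hq1
  have hQ1 := hQ1' hq0 hq1
  have he : HasProd (fun k : ℕ => 1 - q * q ^ (2 * k)) (qpInf q (q ^ 2)) := by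
    have h := hasProd_qpInf hQ0 hQ1 hq0.le hq1
    convert h using 2 with k
    rw [pow_mul]
  have ho : HasProd (fun k : ℕ => 1 - q * q ^ (2 * k + 1)) (qpInf (q ^ 2) (q ^ 2)) := by
    have h := hasProd_qpInf hQ0 hQ1 hQ0.le hQ1
    convert h using 2 with k
    rw [← pow_mul]
    ring
  have hcomb : HasProd (fun k : ℕ => 1 - q * q ^ k)
      (qpInf q (q ^ 2) * qpInf (q ^ 2) (q ^ 2)) :=
    HasProd.even_mul_odd (f := fun k : ℕ => 1 - q * q ^ k) he ho
  exact (hasProd_qpInf hq0 hq1 hq0.le hq1).unique hcomb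

lemma euler_pair : qpInf (-q) q * qpInf q (q ^ 2) = 1 := by
  have hQ0 := hQ0' hq0 hq1
  have hQ1 := hQ1' hq0 hq1
  have h1 := hasProd_neg_q hq0 hq1
  have h2 := hasProd_qpInf hq0 hq1 hq0.le hq1
  have h3 : Filter.Tendsto (fun s : Finset ℕ =>
      (∏ k ∈ s, (1 + q * q ^ k)) * ∏ k ∈ s, (1 - q * q ^ k)) Filter.atTop
      (nhds (qpInf (-q) q * qpInf q q)) := Filter.Tendsto.mul h1 h2
  have h4 : HasProd (fun k : ℕ => (1 + q * q ^ k) * (1 - q * q ^ k))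
      (qpInf (-q) q * qpInf q q) := by
    show Filter.Tendsto (fun s : Finset ℕ =>
      ∏ k ∈ s, ((1 + q * q ^ k) * (1 - q * q ^ k))) Filter.atTop _
    simpa only [Finset.prod_mul_distrib] using h3
  have h5 : HasProd (fun k : ℕ => 1 - q ^ 2 * (q ^ 2) ^ k) (qpInf (-q) q * qpInf q q) := by
    convert h4 using 2 with k
    rw [← pow_mul]
    ring
  have h6 : qpInf (q ^ 2) (q ^ 2) = qpInf (-q) q * qpInf q q :=
    (hasProd_qpInf hQ0 hQ1 hQ0.le hQ1).unique h5
  rw [qqsplit hq0 hq1] at h6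
  have hB : 0 < qpInf (q ^ 2) (q ^ 2) := qpInf_pos hQ0 hQ1 hQ0.le hQ1
  have : (qpInf (-q) q * qpInf q (q ^ 2)) * qpInf (q ^ 2) (q ^ 2) =
      1 * qpInf (q ^ 2) (q ^ 2) := by
    rw [one_mul]
    linear_combination -h6
  exact mul_right_cancel₀ hB.ne' this

lemma qp_split (n : ℕ) : qp q q (2 * n + 1) = qp q (q ^ 2) (n + 1) * qp (q ^ 2) (q ^ 2) n := by
  induction n with
  | zero => simp [qp]
  | succ m ih =>
    have e1 : 2 * (m + 1) + 1 = (2 * m + 1) + 1 + 1 := by ring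
    rw [e1, qp_succ, qp_succ, ih, qp_succ q (q ^ 2) (m + 1), qp_succ (q ^ 2) (q ^ 2) m]
    have e2 : q * q ^ (2 * m + 1) = q ^ 2 * (q ^ 2) ^ m := by
      rw [← pow_mul]
      ring
    have e3 : q * q ^ (2 * m + 1 + 1) = q * (q ^ 2) ^ (m + 1) := by
      rw [← pow_mul]
      ring
    rw [e2, e3]
    ring

end Pairing

lemma two_dvd_mul_pred (n : ℕ) : 2 * (n * (n - 1) / 2) = n * (n - 1) := by
  cases n with
  | zero => rfl
  | succ m =>
    apply Nat.mul_div_cancel'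
    obtain ⟨a, ha⟩ := Nat.even_mul_succ_self m
    refine ⟨a, ?_⟩
    have hcomm : (m + 1) * ((m + 1) - 1) = m * (m + 1) := by
      simp [Nat.succ_sub_one]
      ring
    omega

lemma exp_id (n j : ℕ) : (n + 1) ^ 2 + (2 * n + 1) * j = (j + 1) + n * (n - 1) + (2 * j + 3) * n := by
  cases n with
  | zero => ring
  | succ m =>
    simp only [Nat.succ_sub_one]
    ring


theorem stmt16 (q : ℝ) (hq0 : 0 < q) (hq1 : q < 1) :
    (∑' n : ℕ, (-1 : ℝ) ^ (n + 1) * qp q (q ^ 2) n * q ^ ((n + 1) ^ 2) / qp q q (2 * n + 1)) =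
      (-q / qpInf (-q) q) * ∑' n : ℕ, q ^ (2 * n * (n + 1)) / (qp q (q ^ 2) (n + 1)) ^ 2 := by
  have hQ0 : 0 < q ^ 2 := by positivity
  have hQ1 : q ^ 2 < 1 := by nlinarith
  have hc2 : 0 < qpInf (q ^ 2) (q ^ 2) := qpInf_pos hQ0 hQ1 hQ0.le hQ1
  have hcq : 0 < qpInf q (q ^ 2) := qpInf_pos hQ0 hQ1 hq0.le hq1
  have hqp2pos : ∀ n, 0 < qp (q ^ 2) (q ^ 2) n := qp_pos hQ0.le hQ1.le hQ0.le hQ1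
  have hqp2ge : ∀ n, qpInf (q ^ 2) (q ^ 2) ≤ qp (q ^ 2) (q ^ 2) n :=
    qpInf_le_qp hQ0 hQ1 hQ0.le hQ1
  have hqpqpos : ∀ n, 0 < qp q (q ^ 2) n := qp_pos hQ0.le hQ1.le hq0.le hq1
  set F : ℕ × ℕ → ℝ :=
    fun p => (-1) ^ (p.1 + 1) * q ^ ((p.1 + 1) ^ 2 + (2 * p.1 + 1) * p.2) /
      qp (q ^ 2) (q ^ 2) p.1 with hF_def
  -- summability of F
  have habs : ∀ p : ℕ × ℕ, |F p| ≤ q ^ p.1 * q ^ p.2 * (qpInf (q ^ 2) (q ^ 2))⁻¹ := by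
    rintro ⟨n, j⟩
    have h1 : |F (n, j)| = q ^ ((n + 1) ^ 2 + (2 * n + 1) * j) / qp (q ^ 2) (q ^ 2) n := by
      rw [hF_def]
      simp only
      rw [abs_div, abs_mul, abs_pow, abs_pow, abs_neg, abs_one, one_pow, one_mul,
        abs_of_nonneg hq0.le, abs_of_nonneg (hqp2pos n).le]
    rw [h1]
    have hexp : n + j ≤ (n + 1) ^ 2 + (2 * n + 1) * j := by
      have e1 : n ≤ (n + 1) ^ 2 := by nlinarith
      have e2 : j ≤ (2 * n + 1) * j := Nat.le_mul_of_pos_left j (by omega)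
      omega
    have h2 : q ^ ((n + 1) ^ 2 + (2 * n + 1) * j) ≤ q ^ (n + j) :=
      pow_le_pow_of_le_one hq0.le hq1.le hexp
    have h3 : (0:ℝ) < qp (q ^ 2) (q ^ 2) n := hqp2pos n
    simp only
    rw [div_le_iff₀ h3, ← pow_add]
    have h4 : (1:ℝ) ≤ (qpInf (q ^ 2) (q ^ 2))⁻¹ * qp (q ^ 2) (q ^ 2) n := by
      rw [← div_eq_inv_mul, le_div_iff₀ hc2]
      linarith [hqp2ge n]
    nlinarith [mul_le_mul_of_nonneg_left h4 (pow_nonneg hq0.le (n + j)),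
      pow_nonneg hq0.le (n + j)]
  have hFs : Summable F := by
    apply Summable.of_abs
    apply Summable.of_nonneg_of_le (fun p => abs_nonneg _) habs
    have hgeo : Summable fun n : ℕ => q ^ n := summable_geometric_of_lt_one hq0.le hq1
    exact (hgeo.mul_of_nonneg hgeo (fun n => pow_nonneg hq0.le n)
      (fun n => pow_nonneg hq0.le n)).mul_right _
  -- LHS rewriting
  have hqe : ∀ n : ℕ, q * (q ^ 2) ^ n = q ^ (2 * n + 1) := by
    intro n
    rw [← pow_mul]
    ring
  have hgeoj : ∀ n : ℕ, ∑' j : ℕ, (q ^ (2 * n + 1)) ^ j = (1 - q ^ (2 * n + 1))⁻¹ := by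
    intro n
    exact tsum_geometric_of_lt_one (pow_nonneg hq0.le _) (pow_lt_one₀ hq0.le hq1 (by omega))
  have hqlt : ∀ n : ℕ, q ^ (2 * n + 1) < 1 := fun n => pow_lt_one₀ hq0.le hq1 (by omega)
  have hLHSn : ∀ n : ℕ, (-1 : ℝ) ^ (n + 1) * qp q (q ^ 2) n * q ^ ((n + 1) ^ 2) /
      qp q q (2 * n + 1) = ∑' j : ℕ, F (n, j) := by
    intro n
    have hterm : ∀ j : ℕ, F (n, j) =
        ((-1 : ℝ) ^ (n + 1) * q ^ ((n + 1) ^ 2) / qp (q ^ 2) (q ^ 2) n) *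
          (q ^ (2 * n + 1)) ^ j := by
      intro j
      rw [hF_def]
      simp only
      rw [pow_add q ((n + 1) ^ 2) ((2 * n + 1) * j), pow_mul q (2 * n + 1) j]
      ring
    rw [tsum_congr hterm, tsum_mul_left, hgeoj n]
    rw [qp_split hq0 hq1 n, qp_succ, hqe n]
    have h1 : qp q (q ^ 2) n ≠ 0 := (hqpqpos n).ne'
    have h2 : qp (q ^ 2) (q ^ 2) n ≠ 0 := (hqp2pos n).ne'
    have h3 : (1:ℝ) - q ^ (2 * n + 1) ≠ 0 := by linarith [hqlt n]
    field_simp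
  -- RHS rewriting
  have hRHSj : ∀ j : ℕ, ∑' n : ℕ, F (n, j) =
      -(q ^ (j + 1) * qpInf (q * (q ^ 2) ^ (j + 1)) (q ^ 2)) := by
    intro j
    have hx0 : 0 ≤ q * (q ^ 2) ^ (j + 1) := by positivity
    have hx1 : q * (q ^ 2) ^ (j + 1) < 1 := by
      nlinarith [pow_le_one₀ hQ0.le hQ1.le (n := j + 1), pow_pos hQ0 (j + 1)]
    rw [euler hQ0 hQ1 hx0 hx1, eS, ← tsum_mul_left, ← tsum_neg]
    apply tsum_congr
    intro n
    rw [hF_def]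
    simp only
    have e1 : ((q ^ 2) ^ (n * (n - 1) / 2) : ℝ) = q ^ (n * (n - 1)) := by
      rw [← pow_mul, two_dvd_mul_pred]
    have e2 : ((q * (q ^ 2) ^ (j + 1)) ^ n : ℝ) = q ^ ((2 * j + 3) * n) := by
      rw [mul_pow, ← pow_mul, ← pow_mul, ← pow_add]
      congr 1
      ring
    have h2 : qp (q ^ 2) (q ^ 2) n ≠ 0 := (hqp2pos n).ne'
    rw [e1, e2, exp_id n j, pow_add, pow_add, ← mul_div_assoc, ← neg_div,
      div_eq_div_iff h2 h2]
    ring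
  -- the ω-sum equals fF q q
  have homega : (∑' n : ℕ, q ^ (2 * n * (n + 1)) / (qp q (q ^ 2) (n + 1)) ^ 2) = fF q q := by
    rw [fine_eq hq0 hq1 hq0.le hq1, fG]
    apply tsum_congr
    intro n
    have e1 : (2 * n ^ 2 + n) + n = 2 * n * (n + 1) := by ring
    rw [← e1, pow_add, sq]
    ring
  -- prefix step
  have hprefix : ∀ j : ℕ, qpInf q (q ^ 2) =
      qp q (q ^ 2) (j + 1) * qpInf (q * (q ^ 2) ^ (j + 1)) (q ^ 2) :=
    fun j => qpInf_prefix hQ0 hQ1 hq0.le hq1 (j + 1)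
  -- RHS scalar
  have hscal : -q / qpInf (-q) q = -q * qpInf q (q ^ 2) := by
    have hp := euler_pair hq0 hq1
    have hne : qpInf (-q) q ≠ 0 := by
      intro h
      rw [h] at hp
      simp at hp
    field_simp
    linear_combination hp
  -- assemble
  calc (∑' n : ℕ, (-1 : ℝ) ^ (n + 1) * qp q (q ^ 2) n * q ^ ((n + 1) ^ 2) / qp q q (2 * n + 1))
      = ∑' n : ℕ, ∑' j : ℕ, F (n, j) := tsum_congr hLHSn
    _ = ∑' p : ℕ × ℕ, F p := (Summable.tsum_prod hFs).symm
    _ = ∑' j : ℕ, ∑' n : ℕ, F (n, j) := by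
        rw [Summable.tsum_prod hFs]
        exact (Summable.tsum_comm (f := fun n j => F (n, j)) hFs).symm
    _ = ∑' j : ℕ, -(q ^ (j + 1) * qpInf (q * (q ^ 2) ^ (j + 1)) (q ^ 2)) := tsum_congr hRHSj
    _ = (-q / qpInf (-q) q) * ∑' n : ℕ, q ^ (2 * n * (n + 1)) / (qp q (q ^ 2) (n + 1)) ^ 2 := by
        rw [homega, hscal, fF, ← tsum_mul_left]
        apply tsum_congr
        intro j
        have h1 : qp q (q ^ 2) (j + 1) ≠ 0 := (hqpqpos (j + 1)).ne'
        have h2 := hprefix j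
        rw [pow_succ]
        field_simp
        linear_combination h2
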